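/- Let v, w ∈ S_n be fully commutative permutations with w = v·s_i, ℓ(w) = ℓ(v)+1, and i ∈ supp(v). Set M := max{v(j) : j ≤ i} and m := min{v(j) : j ≥ i+1}. Then the one-line notation of v has the form v = ⋯ M a₁ ⋯ a_h v(i) v(i+1) e₁ ⋯ e_j m ⋯, where a₁ < a₂ < ⋯ < a_h < v(i) < m < M < v(i+1) < e₁ < e₂ < ⋯ < e_j; that is, all entries strictly between the positions of M and v(i) are increasing and less than v(i), and all entries strictly between the positions of v(i+1) and m are increasing and greater than v(i+1). -/

import Mathlib

/-- The value in position `j` (0-indexed) of the one-line notation of `w`,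
extended by the identity outside the range `[0, n)`. -/
def entry {n : ℕ} (w : Equiv.Perm (Fin n)) (j : ℕ) : ℕ :=
  if h : j < n then (w ⟨j, h⟩ : ℕ) else j

/-- One-line notation of a permutation, as a list of natural numbers (0-indexed values). -/
def oneLine {n : ℕ} (w : Equiv.Perm (Fin n)) : List ℕ :=
  List.ofFn (fun i => (w i : ℕ))

/-- A permutation is fully commutative iff it avoids the pattern 321. -/
def FullyCommutative {n : ℕ} (w : Equiv.Perm (Fin n)) : Prop :=
  ¬ ∃ i j k : Fin n, i < j ∧ j < k ∧ w k < w j ∧ w j < w i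

/-- A permutation is boolean iff it avoids the patterns 321 and 3412. -/
def BooleanPerm {n : ℕ} (w : Equiv.Perm (Fin n)) : Prop :=
  FullyCommutative w ∧
    ¬ ∃ i j k l : Fin n, i < j ∧ j < k ∧ k < l ∧
        w k < w l ∧ w l < w i ∧ w i < w j

/-- The Coxeter length of a permutation: its number of inversions. -/
def invCount {n : ℕ} (w : Equiv.Perm (Fin n)) : ℕ :=
  (Finset.univ.filter fun p : Fin n × Fin n => p.1 < p.2 ∧ w p.2 < w p.1).card

/-- The support of `w`: the set of (0-indexed) indices `i` such that the simple
transposition `s_i` appears in some (equivalently, every) reduced word of `w`;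
equivalently, `{w(0),…,w(i)} ≠ {0,…,i}`, i.e. `max {w(j) : j ≤ i} > i`. -/
def Supp {n : ℕ} (w : Equiv.Perm (Fin n)) : Set ℕ :=
  {i | ∃ j : Fin n, (j : ℕ) ≤ i ∧ i < (w j : ℕ)}

/-- The simple transposition `s_i`, swapping positions `i` and `i+1` (0-indexed). -/
def simpleTr {n : ℕ} (i : ℕ) (h : i + 1 < n) : Equiv.Perm (Fin n) :=
  Equiv.swap ⟨i, by omega⟩ ⟨i + 1, h⟩

/-- Schensted row insertion of a value into a tableau (a list of rows). -/
def rowInsert : List (List ℕ) → ℕ → List (List ℕ)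
  | [], x => [[x]]
  | r :: rest, x =>
    match r.find? (fun y => decide (x < y)) with
    | none => (r ++ [x]) :: rest
    | some y => (r.map fun z => if z = y then x else z) :: rowInsert rest y

/-- RSK insertion tableau of a list. -/
def RSKList (l : List ℕ) : List (List ℕ) := l.foldl rowInsert []

/-- RSK insertion tableau `P(w)` of a permutation. -/
def RSKP {n : ℕ} (w : Equiv.Perm (Fin n)) : List (List ℕ) := RSKList (oneLine w)

/-- RSK recording tableau `Q(w) = P(w⁻¹)`. -/
def RSKQ {n : ℕ} (w : Equiv.Perm (Fin n)) : List (List ℕ) := RSKP w⁻¹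

/-- The set of entries in the first row of a tableau. -/
def Row1 (T : List (List ℕ)) : Finset ℕ := (T.getD 0 []).toFinset

/-- The set of entries in the second row of a tableau. -/
def Row2 (T : List (List ℕ)) : Finset ℕ := (T.getD 1 []).toFinset

/-- `BumpsAt l k z` : during the RSK insertion of the list `l`, the insertion of
the `(k+1)`-st letter of `l` bumps the value `z` from the first row to the
second row (`z` is the smallest first-row entry larger than the inserted letter). -/
def BumpsAt (l : List ℕ) (k : ℕ) (z : ℕ) : Prop :=
  k < l.length ∧
    ((RSKList (l.take k)).getD 0 []).find? (fun y => decide (l.getD k 0 < y)) = some z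

/-- `Bumps l b z` : during the RSK insertion of `l`, the value `b` bumps the
value `z` from the first row to the second row. -/
def Bumps (l : List ℕ) (b z : ℕ) : Prop :=
  ∃ k, l.getD k 0 = b ∧ BumpsAt l k z

/-- A finite set of naturals is crowded if some integer interval `[y, y+2x]`
(with `x > 0`) contains more than `x+1` of its elements. -/
def CrowdedSet (L : Finset ℕ) : Prop :=
  ∃ x y : ℤ, 0 < x ∧
    x + 1 < ((L.filter fun a : ℕ => y ≤ (a : ℤ) ∧ (a : ℤ) ≤ y + 2 * x).card : ℤ)

/-- A fully commutative permutation is crowded if the second row of its RSK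
insertion tableau is a crowded set. -/
def CrowdedPerm {n : ℕ} (w : Equiv.Perm (Fin n)) : Prop :=
  CrowdedSet (Row2 (RSKP w))

/-- Covering relation of the right weak order. -/
def RWCovers {n : ℕ} (u v : Equiv.Perm (Fin n)) : Prop :=
  ∃ i, ∃ h : i + 1 < n, v = u * simpleTr i h ∧ invCount v = invCount u + 1

/-- The right weak order on `S_n`. -/
def RightWeakLE {n : ℕ} : Equiv.Perm (Fin n) → Equiv.Perm (Fin n) → Prop :=
  Relation.ReflTransGen RWCovers

/-- Covering relation of the left weak order. -/
def LWCovers {n : ℕ} (u v : Equiv.Perm (Fin n)) : Prop :=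
  ∃ i, ∃ h : i + 1 < n, v = simpleTr i h * u ∧ invCount v = invCount u + 1

/-- The left weak order on `S_n`. -/
def LeftWeakLE {n : ℕ} : Equiv.Perm (Fin n) → Equiv.Perm (Fin n) → Prop :=
  Relation.ReflTransGen LWCovers

/-- A minimal crowded permutation: a crowded fully commutative permutation all of
whose strict predecessors (among fully commutative permutations) in the right
weak order are uncrowded. -/
def MinimalCrowded {n : ℕ} (w : Equiv.Perm (Fin n)) : Prop :=
  FullyCommutative w ∧ CrowdedPerm w ∧
    ∀ v : Equiv.Perm (Fin n), FullyCommutative v → RightWeakLE v w → v ≠ w →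
      ¬ CrowdedPerm v

/-- `l` is an increasing subsequence of the one-line notation of `w`. -/
def IncreasingSubseq {n : ℕ} (w : Equiv.Perm (Fin n)) (l : List ℕ) : Prop :=
  l.Sublist (oneLine w) ∧ l.Pairwise (· < ·)

/-- The length of a longest increasing subsequence of `w`. -/
noncomputable def lisLen {n : ℕ} (w : Equiv.Perm (Fin n)) : ℕ :=
  sSup {k | ∃ l : List ℕ, IncreasingSubseq w l ∧ l.length = k}

/-- A consecutive occurrence of the pattern 415263 starting at (0-indexed) position `i`. -/
def Consec415263 {n : ℕ} (w : Equiv.Perm (Fin n)) (i : ℕ) : Prop :=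
  i + 5 < n ∧
    entry w (i + 1) < entry w (i + 3) ∧ entry w (i + 3) < entry w (i + 5) ∧
    entry w (i + 5) < entry w i ∧ entry w i < entry w (i + 2) ∧
    entry w (i + 2) < entry w (i + 4)

/-- A consecutive occurrence of the pattern 315264 starting at (0-indexed) position `i`. -/
def Consec315264 {n : ℕ} (w : Equiv.Perm (Fin n)) (i : ℕ) : Prop :=
  i + 5 < n ∧
    entry w (i + 1) < entry w (i + 3) ∧ entry w (i + 3) < entry w i ∧
    entry w i < entry w (i + 5) ∧ entry w (i + 5) < entry w (i + 2) ∧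
    entry w (i + 2) < entry w (i + 4)

/-- An occurrence (not necessarily consecutive) of the pattern 415263 in `w`,
at positions `p 0 < p 1 < ⋯ < p 5`. -/
def Occ415263 {n : ℕ} (w : Equiv.Perm (Fin n)) (p : Fin 6 → Fin n) : Prop :=
  StrictMono p ∧
    w (p 1) < w (p 3) ∧ w (p 3) < w (p 5) ∧ w (p 5) < w (p 0) ∧
    w (p 0) < w (p 2) ∧ w (p 2) < w (p 4)
lemma fin_swap_lt {n i : ℕ} (h : i + 1 < n) {a b : Fin n} (hab : a < b)
    (hne : ¬(a = (⟨i, by omega⟩ : Fin n) ∧ b = (⟨i + 1, h⟩ : Fin n))) :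
    Equiv.swap (⟨i, by omega⟩ : Fin n) ⟨i + 1, h⟩ a
      < Equiv.swap (⟨i, by omega⟩ : Fin n) ⟨i + 1, h⟩ b := by
  rw [Equiv.swap_apply_def, Equiv.swap_apply_def]
  split_ifs <;>
    simp only [Fin.lt_def, Fin.ext_iff, Fin.val_mk, not_and] at * <;> omega

lemma pigeonhole_small_value {n : ℕ} (v : Equiv.Perm (Fin n)) (i : ℕ) (j : Fin n)
    (hj : (j : ℕ) ≤ i) (hji : i < (v j : ℕ)) :
    ∃ q : Fin n, i + 1 ≤ (q : ℕ) ∧ (v q : ℕ) ≤ i := by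
  by_contra hcon
  push_neg at hcon
  set A : Finset (Fin n) := Finset.univ.filter (fun k => (k : ℕ) ≤ i) with hA
  have himg : Finset.image v Aᶜ ⊆ Aᶜ := by
    intro x hx
    simp only [Finset.mem_image, Finset.mem_compl, hA, Finset.mem_filter,
      Finset.mem_univ, true_and, not_le] at hx ⊢
    obtain ⟨k, hk, rfl⟩ := hx
    exact hcon k (by omega)
  have heq : Finset.image v Aᶜ = Aᶜ :=
    Finset.eq_of_subset_of_card_le himg
      (le_of_eq (Finset.card_image_of_injective _ v.injective).symm)
  have hjA : j ∈ A := by simp [hA, hj]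
  have : v j ∈ Aᶜ := by
    simp [hA, Finset.mem_compl, Finset.mem_filter]; omega
  rw [← heq] at this
  obtain ⟨k, hk, hkv⟩ := Finset.mem_image.mp this
  have : k = j := v.injective hkv
  subst this
  simp [hA, Finset.mem_compl] at hk
  omega

lemma invCount_mul_simpleTr {n : ℕ} (u : Equiv.Perm (Fin n)) (i : ℕ) (h : i + 1 < n)
    (hlt : (u ⟨i, by omega⟩ : ℕ) < (u ⟨i + 1, h⟩ : ℕ)) :
    invCount (u * simpleTr i h) = invCount u + 1 := by
  have hin : i < n := by omega
  set ii : Fin n := ⟨i, hin⟩ with hii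
  set ii1 : Fin n := ⟨i + 1, h⟩ with hii1
  have hst : simpleTr i h = Equiv.swap ii ii1 := rfl
  have hlt' : (u ii : ℕ) < (u ii1 : ℕ) := hlt
  have hσσ : ∀ k, Equiv.swap ii ii1 (Equiv.swap ii ii1 k) = k := fun k =>
    Equiv.swap_apply_self ii ii1 k
  have key : (Finset.univ.filter fun p : Fin n × Fin n =>
      p.1 < p.2 ∧ (u * simpleTr i h) p.2 < (u * simpleTr i h) p.1)
      = insert (ii, ii1) ((Finset.univ.filter fun p : Fin n × Fin n =>
          p.1 < p.2 ∧ u p.2 < u p.1).image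
          fun p => (Equiv.swap ii ii1 p.1, Equiv.swap ii ii1 p.2)) := by
    ext ⟨a, b⟩
    simp only [Finset.mem_filter, Finset.mem_univ, true_and, Finset.mem_insert,
      Finset.mem_image, hst, Equiv.Perm.mul_apply, Prod.mk.injEq, Prod.exists]
    constructor
    · rintro ⟨hab, hinv⟩
      by_cases hcase : a = ii ∧ b = ii1
      · exact Or.inl ⟨hcase.1, hcase.2⟩
      · refine Or.inr ⟨Equiv.swap ii ii1 a, Equiv.swap ii ii1 b,
          ⟨fin_swap_lt h hab hcase, hinv⟩, hσσ a, hσσ b⟩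
    · rintro (⟨rfl, rfl⟩ | ⟨c, d, ⟨hcd, hinv⟩, rfl, rfl⟩)
      · refine ⟨by simp [hii, hii1, Fin.lt_def], ?_⟩
        rw [Equiv.swap_apply_left, Equiv.swap_apply_right]
        exact Fin.lt_def.mpr hlt
      · have hne : ¬(c = ii ∧ d = ii1) := by
          rintro ⟨rfl, rfl⟩
          exact absurd (Fin.lt_def.mp hinv) (by omega)
        refine ⟨fin_swap_lt h hcd hne, ?_⟩
        rw [hσσ, hσσ]; exact hinv
  have hnotmem : (ii, ii1) ∉ ((Finset.univ.filter fun p : Fin n × Fin n =>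
      p.1 < p.2 ∧ u p.2 < u p.1).image
      fun p => (Equiv.swap ii ii1 p.1, Equiv.swap ii ii1 p.2)) := by
    rw [Finset.mem_image]
    rintro ⟨⟨c, d⟩, hcd, heq⟩
    simp only [Prod.mk.injEq] at heq
    have hc : c = ii1 := by
      have := congrArg (Equiv.swap ii ii1) heq.1
      rwa [hσσ, Equiv.swap_apply_left] at this
    have hd : d = ii := by
      have := congrArg (Equiv.swap ii ii1) heq.2
      rwa [hσσ, Equiv.swap_apply_right] at this
    simp only [Finset.mem_filter] at hcd
    have := hcd.2.1
    rw [hc, hd] at this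
    simp only [hii, hii1, Fin.mk_lt_mk] at this
    omega
  rw [invCount, invCount, key, Finset.card_insert_of_notMem hnotmem,
    Finset.card_image_of_injective]
  intro p q hpq
  simp only [Prod.mk.injEq] at hpq
  exact Prod.ext ((Equiv.swap ii ii1).injective hpq.1)
    ((Equiv.swap ii ii1).injective hpq.2)

/-- **Corollary.** If `i ∈ supp(v)`, then
`v = ⋯ M a₁ ⋯ a_h v(i) v(i+1) e₁ ⋯ e_j m ⋯` with
`a₁ < ⋯ < a_h < v(i) < m < M < v(i+1) < e₁ < ⋯ < e_j`: every entry strictly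
between the positions of `M` and `v(i)` is below `v(i)` and these entries
increase, and every entry strictly between the positions of `v(i+1)` and `m`
exceeds `v(i+1)` and these entries increase. -/
theorem structure_around_3142 {n : ℕ} (v w : Equiv.Perm (Fin n)) (i : ℕ)
    (h : i + 1 < n) (hv : FullyCommutative v) (hw : FullyCommutative w)
    (hwv : w = v * simpleTr i h) (hl : invCount w = invCount v + 1)
    (hsupp : i ∈ Supp v) (M m : ℕ)
    (hM : IsGreatest {x | ∃ j : Fin n, (j : ℕ) ≤ i ∧ (v j : ℕ) = x} M)
    (hm : IsLeast {x | ∃ j : Fin n, i + 1 ≤ (j : ℕ) ∧ (v j : ℕ) = x} m) :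
    ∃ p q : Fin n, (p : ℕ) < i ∧ (v p : ℕ) = M ∧ i + 1 < (q : ℕ) ∧ (v q : ℕ) = m ∧
      entry v i < m ∧ m < M ∧ M < entry v (i + 1) ∧
      (∀ a b : Fin n, (p : ℕ) < (a : ℕ) → (a : ℕ) < (b : ℕ) → (b : ℕ) < i →
        (v a : ℕ) < (v b : ℕ)) ∧
      (∀ a : Fin n, (p : ℕ) < (a : ℕ) → (a : ℕ) < i → (v a : ℕ) < entry v i) ∧
      (∀ a b : Fin n, i + 1 < (a : ℕ) → (a : ℕ) < (b : ℕ) → (b : ℕ) < (q : ℕ) →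
        (v a : ℕ) < (v b : ℕ)) ∧
      (∀ a : Fin n, i + 1 < (a : ℕ) → (a : ℕ) < (q : ℕ) →
        entry v (i + 1) < (v a : ℕ)) := by
  have hin : i < n := by omega
  set ii : Fin n := ⟨i, hin⟩ with hii
  set ii1 : Fin n := ⟨i + 1, h⟩ with hii1
  have hwk : ∀ k : Fin n, w k = v (Equiv.swap ii ii1 k) := by
    intro k; rw [hwv]; rfl
  have e1 : (ii : ℕ) = i := rfl
  have e2 : (ii1 : ℕ) = i + 1 := rfl
  have hent : entry v i = (v ii : ℕ) := by rw [entry, dif_pos hin]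
  have hent1 : entry v (i + 1) = (v ii1 : ℕ) := by rw [entry, dif_pos h]
  obtain ⟨p', hp'le, hp'M⟩ := hM.1
  obtain ⟨q', hq'ge, hq'm⟩ := hm.1
  obtain ⟨j, hjle, hjv⟩ := hsupp
  have hiM : i < M := lt_of_lt_of_le hjv (hM.2 ⟨j, hjle, rfl⟩)
  obtain ⟨r, hrge, hrle⟩ := pigeonhole_small_value v i j hjle hjv
  have hmi : m ≤ i := le_trans (hm.2 ⟨r, hrge, rfl⟩) hrle
  -- v(i) < v(i+1)
  have hvlt : (v ii : ℕ) < (v ii1 : ℕ) := by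
    by_contra hcon
    push_neg at hcon
    have hne : v ii1 ≠ v ii := fun he => by
      have := v.injective he
      rw [hii, hii1, Fin.mk.injEq] at this; omega
    have hlt : (w ii : ℕ) < (w ii1 : ℕ) := by
      rw [hwk, hwk, Equiv.swap_apply_left, Equiv.swap_apply_right]
      exact lt_of_le_of_ne hcon (fun he => hne (Fin.val_injective he))
    have := invCount_mul_simpleTr w i h hlt
    have hws : w * simpleTr i h = v := by
      rw [hwv, mul_assoc, simpleTr, Equiv.swap_mul_self, mul_one]
    rw [hws] at this
    omega
  -- v(i) < m
  have hvim : (v ii : ℕ) < m := by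
    by_contra hcon
    push_neg at hcon
    have hq'ii : q' ≠ ii := fun he => by rw [he, hii] at hq'ge; simp at hq'ge
    have hmv : m < (v ii : ℕ) := lt_of_le_of_ne hcon (fun he => by
      rw [← hq'm] at he
      exact hq'ii (v.injective (Fin.val_injective he)))
    have hq'ii1 : q' ≠ ii1 := fun he => by
      rw [he] at hq'm; omega
    have hq'gt : i + 1 < (q' : ℕ) := lt_of_le_of_ne hq'ge (fun he => hq'ii1 (by
      rw [hii1]; exact Fin.val_injective he.symm))
    refine hw ⟨ii, ii1, q', ?_, ?_, ?_, ?_⟩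
    · exact Fin.lt_def.mpr (by omega)
    · exact Fin.lt_def.mpr (by omega)
    · rw [Fin.lt_def, hwk, hwk, Equiv.swap_apply_right,
        Equiv.swap_apply_of_ne_of_ne hq'ii hq'ii1]
      omega
    · rw [Fin.lt_def, hwk, hwk, Equiv.swap_apply_left, Equiv.swap_apply_right]
      omega
  -- M < v(i+1)
  have hMv1 : M < (v ii1 : ℕ) := by
    by_contra hcon
    push_neg at hcon
    have hp'ii1 : p' ≠ ii1 := fun he => by rw [he, hii1] at hp'le; simp at hp'le
    have hv1M : (v ii1 : ℕ) < M := lt_of_le_of_ne hcon (fun he => by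
      rw [← hp'M] at he
      exact hp'ii1 (v.injective (Fin.val_injective he.symm)))
    have hp'ii : p' ≠ ii := fun he => by rw [he] at hp'M; omega
    have hp'lt : (p' : ℕ) < i := lt_of_le_of_ne hp'le (fun he => hp'ii (by
      rw [hii]; exact Fin.val_injective he))
    refine hw ⟨p', ii, ii1, ?_, ?_, ?_, ?_⟩
    · exact Fin.lt_def.mpr (by omega)
    · exact Fin.lt_def.mpr (by omega)
    · rw [Fin.lt_def, hwk, hwk, Equiv.swap_apply_left, Equiv.swap_apply_right]
      omega
    · rw [Fin.lt_def, hwk, hwk, Equiv.swap_apply_left,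
        Equiv.swap_apply_of_ne_of_ne hp'ii hp'ii1]
      omega
  have hp'ii : p' ≠ ii := fun he => by rw [he] at hp'M; omega
  have hp'lt : (p' : ℕ) < i := lt_of_le_of_ne hp'le (fun he => hp'ii (by
    rw [hii]; exact Fin.val_injective he))
  have hq'ii1 : q' ≠ ii1 := fun he => by rw [he] at hq'm; omega
  have hq'gt : i + 1 < (q' : ℕ) := lt_of_le_of_ne hq'ge (fun he => hq'ii1 (by
    rw [hii1]; exact Fin.val_injective he.symm))
  refine ⟨p', q', hp'lt, hp'M, hq'gt, hq'm, ?_, by omega, ?_, ?_, ?_, ?_, ?_⟩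
  · rw [hent]; exact hvim
  · rw [hent1]; exact hMv1
  -- left increasing
  · intro a b ha hab hbi
    by_contra hcon
    push_neg at hcon
    have hba : (v b : ℕ) < (v a : ℕ) := lt_of_le_of_ne hcon (fun he => by
      have := v.injective (Fin.val_injective he)
      rw [Fin.ext_iff] at this; omega)
    have haM : (v a : ℕ) < M := lt_of_le_of_ne (hM.2 ⟨a, by omega, rfl⟩)
      (fun he => by
        rw [← hp'M] at he
        have := Fin.ext_iff.mp (v.injective (Fin.val_injective he)); omega)
    refine hv ⟨p', a, b, Fin.lt_def.mpr (by omega), Fin.lt_def.mpr (by omega),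
      Fin.lt_def.mpr hba, Fin.lt_def.mpr (by omega)⟩
  -- left bound
  · intro a ha hai
    rw [hent]
    by_contra hcon
    push_neg at hcon
    have hlt : (v ii : ℕ) < (v a : ℕ) := lt_of_le_of_ne hcon (fun he => by
      have := Fin.ext_iff.mp (v.injective (Fin.val_injective he))
      rw [hii] at this; simp at this; omega)
    have haM : (v a : ℕ) < M := lt_of_le_of_ne (hM.2 ⟨a, by omega, rfl⟩)
      (fun he => by
        rw [← hp'M] at he
        have := Fin.ext_iff.mp (v.injective (Fin.val_injective he)); omega)
    refine hv ⟨p', a, ii, Fin.lt_def.mpr (by omega), Fin.lt_def.mpr (by simp [hii]; omega),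
      Fin.lt_def.mpr (by omega), Fin.lt_def.mpr (by omega)⟩
  -- right increasing
  · intro a b ha hab hbq
    by_contra hcon
    push_neg at hcon
    have hba : (v b : ℕ) < (v a : ℕ) := lt_of_le_of_ne hcon (fun he => by
      have := Fin.ext_iff.mp (v.injective (Fin.val_injective he)); omega)
    have hbm : m < (v b : ℕ) := lt_of_le_of_ne (hm.2 ⟨b, by omega, rfl⟩)
      (fun he => by
        rw [← hq'm] at he
        have := Fin.ext_iff.mp (v.injective (Fin.val_injective he.symm)); omega)
    refine hv ⟨a, b, q', Fin.lt_def.mpr (by omega), Fin.lt_def.mpr (by omega),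
      Fin.lt_def.mpr (by omega), Fin.lt_def.mpr hba⟩
  -- right bound
  · intro a ha haq
    rw [hent1]
    by_contra hcon
    push_neg at hcon
    have hlt : (v a : ℕ) < (v ii1 : ℕ) := lt_of_le_of_ne hcon (fun he => by
      have := Fin.ext_iff.mp (v.injective (Fin.val_injective he))
      rw [hii1] at this; simp at this; omega)
    have ham : m < (v a : ℕ) := lt_of_le_of_ne (hm.2 ⟨a, by omega, rfl⟩)
      (fun he => by
        rw [← hq'm] at he
        have := Fin.ext_iff.mp (v.injective (Fin.val_injective he.symm)); omega)
    refine hv ⟨ii1, a, q', Fin.lt_def.mpr (by simp [hii1]; omega), Fin.lt_def.mpr (by omega),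
      Fin.lt_def.mpr (by omega), Fin.lt_def.mpr hlt⟩
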